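/- Let H be a quasi-triangular Hopf algebra, φ an R-preserving Hopf involution, and B ⊂ H a quasi-triangular coideal subalgebra with universal K-matrix K ∈ B ⊗ H. Then K satisfies the φ-twisted reflection equation in B ⊗ H ⊗ H: R₃₂ K₁₃ R₂₃^φ K₁₂ = K₁₂ R₃₂^φ K₁₃ R₂₃, where R^φ := (φ ⊗ id)(R). -/

import Mathlib

open scoped TensorProduct

noncomputable section

variable (k : Type*) [CommRing k] (H : Type*) [Ring H] [HopfAlgebra k H]

/-- Embedding of `H ⊗ H` into legs 1,2 of `H ⊗ H ⊗ H`. -/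
def leg12 : H ⊗[k] H →ₐ[k] H ⊗[k] (H ⊗[k] H) :=
  Algebra.TensorProduct.map (AlgHom.id k H) Algebra.TensorProduct.includeLeft

/-- Embedding of `H ⊗ H` into legs 1,3 of `H ⊗ H ⊗ H`. -/
def leg13 : H ⊗[k] H →ₐ[k] H ⊗[k] (H ⊗[k] H) :=
  Algebra.TensorProduct.map (AlgHom.id k H) Algebra.TensorProduct.includeRight

/-- Embedding of `H ⊗ H` into legs 2,3 of `H ⊗ H ⊗ H`. -/
def leg23 : H ⊗[k] H →ₐ[k] H ⊗[k] (H ⊗[k] H) :=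
  Algebra.TensorProduct.includeRight

/-- `Δ ⊗ id : H ⊗ H → H ⊗ H ⊗ H`. -/
def comulLeft : H ⊗[k] H →ₐ[k] H ⊗[k] (H ⊗[k] H) :=
  (Algebra.TensorProduct.assoc k k k H H H).toAlgHom.comp
    (Algebra.TensorProduct.map (Bialgebra.comulAlgHom k H) (AlgHom.id k H))

/-- `id ⊗ Δ : H ⊗ H → H ⊗ H ⊗ H`. -/
def comulRight : H ⊗[k] H →ₐ[k] H ⊗[k] (H ⊗[k] H) :=
  Algebra.TensorProduct.map (AlgHom.id k H) (Bialgebra.comulAlgHom k H)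

/-- The swap `τ : H ⊗ H → H ⊗ H`. -/
def swapHH : H ⊗[k] H →ₐ[k] H ⊗[k] H := (Algebra.TensorProduct.comm k H H).toAlgHom


section Aux

variable {k H}

lemma swapHH_map (f g : H →ₐ[k] H) (x : H ⊗[k] H) :
    swapHH k H (Algebra.TensorProduct.map f g x) =
      Algebra.TensorProduct.map g f (swapHH k H x) := by
  induction x using TensorProduct.induction_on with
  | zero => simp
  | tmul a b => simp [swapHH]
  | add x y hx hy => simp [hx, hy]

lemma mapHH_mapHH (f g f' g' : H →ₐ[k] H) (x : H ⊗[k] H) :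
    Algebra.TensorProduct.map f g (Algebra.TensorProduct.map f' g' x) =
      Algebra.TensorProduct.map (f.comp f') (g.comp g') x := by
  induction x using TensorProduct.induction_on with
  | zero => simp
  | tmul a b => simp
  | add x y hx hy => simp [hx, hy]

/-- `id ⊗ φ ⊗ id` on `H ⊗ (H ⊗ H)`. -/
def phi3 (φ : H →ₐ[k] H) : H ⊗[k] (H ⊗[k] H) →ₐ[k] H ⊗[k] (H ⊗[k] H) :=
  Algebra.TensorProduct.map (AlgHom.id k H)
    (Algebra.TensorProduct.map φ (AlgHom.id k H))

lemma phi3_leg23 (φ : H →ₐ[k] H) (y : H ⊗[k] H) :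
    phi3 φ (leg23 k H y) =
      leg23 k H (Algebra.TensorProduct.map φ (AlgHom.id k H) y) := by
  simp [phi3, leg23]

lemma phi3_leg13 (φ : H →ₐ[k] H) (z : H ⊗[k] H) :
    phi3 φ (leg13 k H z) = leg13 k H z := by
  induction z using TensorProduct.induction_on with
  | zero => simp
  | tmul a b => simp [phi3, leg13]
  | add x y hx hy => simp [hx, hy]

lemma phi3_leg12 (φ : H →ₐ[k] H) (z : H ⊗[k] H) :
    phi3 φ (leg12 k H z) =
      leg12 k H (Algebra.TensorProduct.map (AlgHom.id k H) φ z) := by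
  induction z using TensorProduct.induction_on with
  | zero => simp
  | tmul a b => simp [phi3, leg12]
  | add x y hx hy => simp [hx, hy]

lemma phi3_unit_tmul (φ : H →ₐ[k] H) (h : H) :
    phi3 φ ((1 : H) ⊗ₜ[k] ((1 : H) ⊗ₜ[k] h)) =
      (1 : H) ⊗ₜ[k] ((1 : H) ⊗ₜ[k] h) := by
  simp [phi3]

lemma assoc_tmul_eq (y : H ⊗[k] H) (h : H) :
    (Algebra.TensorProduct.assoc k k k H H H) (y ⊗ₜ[k] h) =
      leg12 k H y * ((1 : H) ⊗ₜ[k] ((1 : H) ⊗ₜ[k] h)) := by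
  induction y using TensorProduct.induction_on with
  | zero => simp [TensorProduct.zero_tmul]
  | tmul a b =>
      simp [leg12, Algebra.TensorProduct.tmul_mul_tmul]
  | add x y hx hy => simp [TensorProduct.add_tmul, hx, hy, add_mul]

lemma leg12_mul_unit_comm (z : H ⊗[k] H) (h : H) :
    leg12 k H z * ((1 : H) ⊗ₜ[k] ((1 : H) ⊗ₜ[k] h)) =
      ((1 : H) ⊗ₜ[k] ((1 : H) ⊗ₜ[k] h)) * leg12 k H z := by
  induction z using TensorProduct.induction_on with
  | zero => simp
  | tmul a b => simp [leg12, Algebra.TensorProduct.tmul_mul_tmul]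
  | add x y hx hy => simp [hx, hy, add_mul, mul_add]

lemma comulLeft_tmul (b h : H) :
    comulLeft k H (b ⊗ₜ[k] h) =
      leg12 k H (Coalgebra.comul (R := k) b) *
        ((1 : H) ⊗ₜ[k] ((1 : H) ⊗ₜ[k] h)) := by
  have : comulLeft k H (b ⊗ₜ[k] h) =
      (Algebra.TensorProduct.assoc k k k H H H)
        ((Coalgebra.comul (R := k) b) ⊗ₜ[k] h) := by
    simp [comulLeft]
  rw [this, assoc_tmul_eq]

lemma intertwineA (φ : H →ₐ[k] H) (B : Subalgebra k H) (K : H ⊗[k] H)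
    (hK_intertwine : ∀ b ∈ B,
      K * Coalgebra.comul (R := k) (b : H) =
        Algebra.TensorProduct.map (AlgHom.id k H) φ
          (Coalgebra.comul (R := k) (b : H)) * K)
    (w : (↥B) ⊗[k] H) :
    leg12 k H K * comulLeft k H
        (TensorProduct.map (Subalgebra.toSubmodule B).subtype
          (LinearMap.id : H →ₗ[k] H) w) =
      phi3 φ (comulLeft k H
        (TensorProduct.map (Subalgebra.toSubmodule B).subtype
          (LinearMap.id : H →ₗ[k] H) w)) * leg12 k H K := by
  induction w using TensorProduct.induction_on with
  | zero => simp
  | tmul b h =>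
      have hx : TensorProduct.map (Subalgebra.toSubmodule B).subtype
          (LinearMap.id : H →ₗ[k] H) (b ⊗ₜ[k] h) = (b : H) ⊗ₜ[k] h := rfl
      rw [hx, comulLeft_tmul, ← mul_assoc, ← map_mul,
        hK_intertwine (b : H) b.2, map_mul, mul_assoc, leg12_mul_unit_comm,
        ← mul_assoc, map_mul, phi3_leg12, phi3_unit_tmul]
  | add x y hx hy =>
      rw [map_add, map_add, mul_add, map_add, add_mul, hx, hy]

end Aux

/-- Let `(H, R)` be a quasi-triangular Hopf algebra, `φ` an `R`-preserving Hopf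
algebra involution, and `B ⊂ H` a quasi-triangular coideal subalgebra with
universal `K`-matrix `K ∈ B ⊗ H`.  Then `K` satisfies the `φ`-twisted reflection
equation in `B ⊗ H ⊗ H`:
`R₃₂ K₁₃ R₂₃^φ K₁₂ = K₁₂ R₃₂^φ K₁₃ R₂₃`, where `R^φ := (φ ⊗ id)(R)`. -/
theorem universal_K_matrix_twisted_reflection
    (φ : H →ₐ[k] H) (hφ_inv : ∀ x, φ (φ x) = x)
    (hφ_comul : ∀ x : H,
      Coalgebra.comul (R := k) (φ x) =
        TensorProduct.map φ.toLinearMap φ.toLinearMap (Coalgebra.comul x))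
    (R : H ⊗[k] H) (hR_unit : IsUnit R)
    (hQT : ∀ x : H,
      R * Coalgebra.comul (R := k) x = swapHH k H (Coalgebra.comul (R := k) x) * R)
    (hφR : Algebra.TensorProduct.map φ φ R = R)
    (B : Subalgebra k H)
    (hcoideal : ∀ b ∈ B, Coalgebra.comul (R := k) (b : H) ∈
      LinearMap.range (TensorProduct.map (Subalgebra.toSubmodule B).subtype
        (LinearMap.id : H →ₗ[k] H)))
    (K : H ⊗[k] H)
    (hK_mem : K ∈ LinearMap.range (TensorProduct.map
      (Subalgebra.toSubmodule B).subtype (LinearMap.id : H →ₗ[k] H)))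
    (hK_unit : IsUnit K)
    (hK_intertwine : ∀ b ∈ B,
      K * Coalgebra.comul (R := k) (b : H) =
        Algebra.TensorProduct.map (AlgHom.id k H) φ (Coalgebra.comul (R := k) (b : H)) * K)
    (hK_comul_left : comulLeft k H K =
      leg23 k H (swapHH k H (Algebra.TensorProduct.map φ (AlgHom.id k H) R)) *
        leg13 k H K * leg23 k H R)
    (hK_comul_right : comulRight k H K =
      leg23 k H (swapHH k H R) * leg13 k H K *
        leg23 k H (Algebra.TensorProduct.map φ (AlgHom.id k H) R) * leg12 k H K) :
    leg23 k H (swapHH k H R) * leg13 k H K *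
        leg23 k H (Algebra.TensorProduct.map φ (AlgHom.id k H) R) * leg12 k H K =
      leg12 k H K *
        leg23 k H (swapHH k H (Algebra.TensorProduct.map φ (AlgHom.id k H) R)) *
        leg13 k H K * leg23 k H R := by
  obtain ⟨w, hw⟩ := hK_mem
  have hA1 : phi3 φ (leg23 k H
      (swapHH k H (Algebra.TensorProduct.map φ (AlgHom.id k H) R))) =
      leg23 k H (swapHH k H R) := by
    rw [phi3_leg23, swapHH_map, mapHH_mapHH]
    have : swapHH k H R =
        Algebra.TensorProduct.map (φ.comp (AlgHom.id k H))
          ((AlgHom.id k H).comp φ) (swapHH k H R) := by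
      rw [AlgHom.comp_id, AlgHom.id_comp, ← swapHH_map, hφR]
    rw [← this]
  have hA2 : phi3 φ (leg13 k H K) = leg13 k H K := phi3_leg13 φ K
  have hA3 : phi3 φ (leg23 k H R) =
      leg23 k H (Algebra.TensorProduct.map φ (AlgHom.id k H) R) :=
    phi3_leg23 φ R
  calc leg23 k H (swapHH k H R) * leg13 k H K *
        leg23 k H (Algebra.TensorProduct.map φ (AlgHom.id k H) R) * leg12 k H K
      = phi3 φ (comulLeft k H K) * leg12 k H K := by
        rw [hK_comul_left, map_mul, map_mul, hA1, hA2, hA3]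
    _ = leg12 k H K * comulLeft k H K := by
        have h := (intertwineA φ B K hK_intertwine w).symm
        rw [hw] at h; exact h
    _ = leg12 k H K *
          leg23 k H (swapHH k H (Algebra.TensorProduct.map φ (AlgHom.id k H) R)) *
          leg13 k H K * leg23 k H R := by
        rw [hK_comul_left, ← mul_assoc, ← mul_assoc]
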